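/- A continuous self-map f of a compact metric space X is weakly mixing if and only if for every finite collection of nonempty open sets U_1,...,U_m there exists a strictly increasing sequence (r_n) of positive integers such that the closures of f^{r_n}(U_i) converge to X in the Hausdorff metric for each i = 1,...,m. -/

import Mathlib

open Set Metric Filter

section StmtAux

variable {X : Type*} [MetricSpace X] [CompactSpace X]

/-- Weak mixing hypothesis, as in the statement. -/
private def StmtWM (f : X → X) : Prop :=
  ∀ U₁ U₂ V₁ V₂ : Set X, IsOpen U₁ → IsOpen U₂ → IsOpen V₁ → IsOpen V₂ →
    U₁.Nonempty → U₂.Nonempty → V₁.Nonempty → V₂.Nonempty →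
    ∃ k : ℕ, 1 ≤ k ∧ (f^[k] '' U₁ ∩ V₁).Nonempty ∧ (f^[k] '' U₂ ∩ V₂).Nonempty

private lemma stmt_combine {f : X → X} (hf : Continuous f) (h : StmtWM f)
    (U1 V1 U2 V2 : Set X) (hU1 : IsOpen U1) (hV1 : IsOpen V1) (hU2 : IsOpen U2)
    (hV2 : IsOpen V2) (nU1 : U1.Nonempty) (nV1 : V1.Nonempty) (nU2 : U2.Nonempty)
    (nV2 : V2.Nonempty) :
    ∃ A B : Set X, IsOpen A ∧ IsOpen B ∧ A.Nonempty ∧ B.Nonempty ∧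
      ∀ n, (f^[n] '' A ∩ B).Nonempty →
        (f^[n] '' U1 ∩ V1).Nonempty ∧ (f^[n] '' U2 ∩ V2).Nonempty := by
  obtain ⟨k, -, h1, h2⟩ := h U1 V1 U2 V2 hU1 hV1 hU2 hV2 nU1 nV1 nU2 nV2
  refine ⟨U1 ∩ f^[k] ⁻¹' U2, V1 ∩ f^[k] ⁻¹' V2,
    hU1.inter (hU2.preimage (hf.iterate k)), hV1.inter (hV2.preimage (hf.iterate k)),
    ?_, ?_, ?_⟩
  · obtain ⟨x, ⟨u, hu, rfl⟩, hx⟩ := h1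
    exact ⟨u, hu, hx⟩
  · obtain ⟨x, ⟨u, hu, rfl⟩, hx⟩ := h2
    exact ⟨u, hu, hx⟩
  · rintro n ⟨x, ⟨a, ⟨ha1, ha2⟩, rfl⟩, hb1, hb2⟩
    refine ⟨⟨f^[n] a, ⟨a, ha1, rfl⟩, hb1⟩, ⟨f^[k] (f^[n] a), ⟨f^[k] a, ha2, ?_⟩, hb2⟩⟩
    rw [← Function.iterate_add_apply, ← Function.iterate_add_apply, Nat.add_comm]

private lemma stmt_multi {f : X → X} (hf : Continuous f) (h : StmtWM f) [Nonempty X]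
    (s : Finset (Set X × Set X))
    (hs : ∀ p ∈ s, IsOpen p.1 ∧ IsOpen p.2 ∧ p.1.Nonempty ∧ p.2.Nonempty) :
    ∃ A B : Set X, IsOpen A ∧ IsOpen B ∧ A.Nonempty ∧ B.Nonempty ∧
      ∀ n, (f^[n] '' A ∩ B).Nonempty → ∀ p ∈ s, (f^[n] '' p.1 ∩ p.2).Nonempty := by
  classical
  induction s using Finset.induction with
  | empty =>
      exact ⟨univ, univ, isOpen_univ, isOpen_univ, univ_nonempty, univ_nonempty,
        fun n _ p hp => absurd hp (by simp)⟩
  | @insert p s hps ih =>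
      obtain ⟨A', B', hA'o, hB'o, hA'ne, hB'ne, hAB'⟩ :=
        ih (fun q hq => hs q (Finset.mem_insert_of_mem hq))
      obtain ⟨hpo1, hpo2, hpn1, hpn2⟩ := hs p (Finset.mem_insert_self p s)
      obtain ⟨A, B, hAo, hBo, hAne, hBne, hAB⟩ :=
        stmt_combine hf h p.1 p.2 A' B' hpo1 hpo2 hA'o hB'o hpn1 hpn2 hA'ne hB'ne
      refine ⟨A, B, hAo, hBo, hAne, hBne, fun n hn q hq => ?_⟩
      rcases Finset.mem_insert.1 hq with rfl | hq
      · exact (hAB n hn).1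
      · exact hAB' n ((hAB n hn).2) q hq

private lemma stmt_surj {f : X → X} (hf : Continuous f) (h : StmtWM f) [Nonempty X] :
    Function.Surjective f := by
  have hcl : IsClosed (Set.range f) := (isCompact_range hf).isClosed
  by_contra hns
  have hne : (Set.range f)ᶜ.Nonempty := by
    rw [Set.nonempty_compl]
    intro hr
    exact hns (Set.range_eq_univ.mp hr)
  obtain ⟨k, hk1, ⟨x, ⟨u, -, rfl⟩, hxV⟩, -⟩ :=
    h univ univ (Set.range f)ᶜ (Set.range f)ᶜ isOpen_univ isOpen_univ
      hcl.isOpen_compl hcl.isOpen_compl univ_nonempty univ_nonempty hne hne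
  obtain ⟨j, rfl⟩ := Nat.exists_eq_add_of_le hk1
  rw [Nat.add_comm] at hxV
  exact hxV ⟨f^[j] u, (Function.iterate_succ_apply' f j u).symm⟩

private lemma stmt_times {f : X → X} (hf : Continuous f) (h : StmtWM f) [Nonempty X]
    (s : Finset (Set X × Set X))
    (hs : ∀ p ∈ s, IsOpen p.1 ∧ IsOpen p.2 ∧ p.1.Nonempty ∧ p.2.Nonempty) (K : ℕ) :
    ∃ k, K ≤ k ∧ 1 ≤ k ∧ ∀ p ∈ s, (f^[k] '' p.1 ∩ p.2).Nonempty := by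
  classical
  have hKsurj : Function.Surjective f^[K] := (stmt_surj hf h).iterate K
  have hside : ∀ q ∈ s.image fun p => (p.1, f^[K] ⁻¹' p.2),
      IsOpen q.1 ∧ IsOpen q.2 ∧ q.1.Nonempty ∧ q.2.Nonempty := by
    rintro q hq
    rw [Finset.mem_image] at hq
    obtain ⟨p, hp, rfl⟩ := hq
    obtain ⟨h1, h2, h3, h4⟩ := hs p hp
    exact ⟨h1, h2.preimage (hf.iterate K), h3, h4.preimage hKsurj⟩
  obtain ⟨A, B, hAo, hBo, hAne, hBne, hAB⟩ :=
    stmt_multi hf h (s.image fun p => (p.1, f^[K] ⁻¹' p.2)) hside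
  obtain ⟨k, hk1, hkAB, -⟩ := h A A B B hAo hAo hBo hBo hAne hAne hBne hBne
  refine ⟨K + k, Nat.le_add_right K k, le_trans hk1 (Nat.le_add_left k K), fun p hp => ?_⟩
  have := hAB k hkAB (p.1, f^[K] ⁻¹' p.2) (Finset.mem_image_of_mem _ hp)
  obtain ⟨x, ⟨u, hu, rfl⟩, hx⟩ := this
  exact ⟨f^[K] (f^[k] u), ⟨u, hu, Function.iterate_add_apply f K k u⟩, hx⟩

private lemma stmt_dense_step {f : X → X} (hf : Continuous f) (h : StmtWM f) [Nonempty X]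
    (m : ℕ) (U : Fin m → Set X) (hUo : ∀ i, IsOpen (U i)) (hUne : ∀ i, (U i).Nonempty)
    (K : ℕ) {ε : ℝ} (hε : 0 < ε) :
    ∃ k, K ≤ k ∧ 1 ≤ k ∧
      ∀ i, hausdorffDist (closure (f^[k] '' U i)) (univ : Set X) ≤ 2 * ε := by
  classical
  obtain ⟨t, -, htfin, htcov⟩ := finite_cover_balls_of_compact (isCompact_univ : IsCompact (Set.univ : Set X)) hε
  set s : Finset (Set X × Set X) :=
    ((Finset.univ : Finset (Fin m)) ×ˢ htfin.toFinset).image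
      (fun q => (U q.1, ball q.2 ε)) with hsdef
  have hside : ∀ q ∈ s, IsOpen q.1 ∧ IsOpen q.2 ∧ q.1.Nonempty ∧ q.2.Nonempty := by
    rintro q hq
    rw [hsdef, Finset.mem_image] at hq
    obtain ⟨⟨i, c⟩, -, rfl⟩ := hq
    exact ⟨hUo i, isOpen_ball, hUne i, nonempty_ball.2 hε⟩
  obtain ⟨k, hkK, hk1, hk⟩ := stmt_times hf h s hside K
  refine ⟨k, hkK, hk1, fun i => ?_⟩
  refine hausdorffDist_le_of_infDist (by positivity) (fun x _ => ?_) (fun x _ => ?_)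
  · have : infDist x (univ : Set X) ≤ dist x x := infDist_le_dist_of_mem (mem_univ x)
    simp at this
    linarith
  · obtain ⟨c, hct, hxc⟩ : ∃ c ∈ t, x ∈ ball c ε := by
      have := htcov (mem_univ x)
      simpa using this
    have hmem : (U i, ball c ε) ∈ s := by
      rw [hsdef]
      refine Finset.mem_image.2 ⟨(i, c), ?_, rfl⟩
      simp [htfin.mem_toFinset, hct]
    obtain ⟨y, hy1, hy2⟩ := hk _ hmem
    rw [infDist_closure]
    calc infDist x (f^[k] '' U i) ≤ dist x y := infDist_le_dist_of_mem hy1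
      _ ≤ dist x c + dist c y := dist_triangle x c y
      _ ≤ ε + ε := by
          rw [mem_ball] at hxc hy2
          rw [dist_comm c y]
          exact add_le_add hxc.le hy2.le
      _ = 2 * ε := by ring


end StmtAux

/-- A continuous self-map `f` of a compact metric space is weakly mixing
iff for every finite collection of nonempty open sets `U_1, ..., U_m` there is a
strictly increasing sequence `(r_n)` of positive integers with
`closure (f^{r_n}(U_i)) → X` in the Hausdorff metric for each `i`. -/
theorem stmt5 {X : Type*} [MetricSpace X] [CompactSpace X]
    (f : X → X) (hf : Continuous f) :
    (∀ U₁ U₂ V₁ V₂ : Set X, IsOpen U₁ → IsOpen U₂ → IsOpen V₁ → IsOpen V₂ →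
      U₁.Nonempty → U₂.Nonempty → V₁.Nonempty → V₂.Nonempty →
      ∃ k : ℕ, 1 ≤ k ∧ (f^[k] '' U₁ ∩ V₁).Nonempty ∧ (f^[k] '' U₂ ∩ V₂).Nonempty) ↔
    (∀ (m : ℕ) (U : Fin m → Set X), (∀ i, IsOpen (U i)) → (∀ i, (U i).Nonempty) →
      ∃ r : ℕ → ℕ, StrictMono r ∧ 1 ≤ r 0 ∧ ∀ i,
        Filter.Tendsto (fun j : ℕ => Metric.hausdorffDist (closure (f^[r j] '' U i)) (Set.univ : Set X))
          Filter.atTop (nhds 0)) := by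
  classical
  rcases isEmpty_or_nonempty X with hX | hX
  · constructor
    · intro _ m U hUo hUne
      refine ⟨fun n => n + 1, fun a b hab => Nat.add_lt_add_right hab 1, le_refl 1, fun i => ?_⟩
      exact absurd (hUne i) (by simp [eq_empty_of_isEmpty (U i)])
    · intro _ U₁ U₂ V₁ V₂ _ _ _ _ hne _ _ _
      exact absurd hne (by simp [eq_empty_of_isEmpty U₁])
  constructor
  · intro h m U hUo hUne
    have key : ∀ K j : ℕ, ∃ k, K ≤ k ∧ 1 ≤ k ∧ ∀ i,
        Metric.hausdorffDist (closure (f^[k] '' U i)) (Set.univ : Set X) ≤ 1 / (j + 1) := by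
      intro K j
      have hε : (0:ℝ) < 1 / (2 * ((j:ℝ) + 1)) := by positivity
      obtain ⟨k, h1, h2, h3⟩ := stmt_dense_step hf h m U hUo hUne K hε
      refine ⟨k, h1, h2, fun i => (h3 i).trans_eq ?_⟩
      field_simp
    choose g hg1 hg2 hg3 using key
    set r : ℕ → ℕ := fun n => Nat.rec (g 1 0) (fun j prev => g (prev + 1) (j + 1)) n with hr
    have hr0 : r 0 = g 1 0 := rfl
    have hrsucc : ∀ j, r (j + 1) = g (r j + 1) (j + 1) := fun j => rfl
    have hmono : StrictMono r := by
      apply strictMono_nat_of_lt_succ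
      intro j
      rw [hrsucc j]
      exact lt_of_lt_of_le (Nat.lt_succ_self _) (hg1 (r j + 1) (j + 1))
    have hbound : ∀ j i,
        Metric.hausdorffDist (closure (f^[r j] '' U i)) (Set.univ : Set X) ≤ 1 / (j + 1) := by
      intro j i
      cases j with
      | zero => rw [hr0]; exact hg3 1 0 i
      | succ n => rw [hrsucc n]; exact hg3 (r n + 1) (n + 1) i
    refine ⟨r, hmono, by rw [hr0]; exact hg1 1 0, fun i => ?_⟩
    exact squeeze_zero (fun j => Metric.hausdorffDist_nonneg) (fun j => hbound j i)
      tendsto_one_div_add_atTop_nhds_zero_nat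
  · intro h U₁ U₂ V₁ V₂ hU₁ hU₂ hV₁ hV₂ nU₁ nU₂ nV₁ nV₂
    obtain ⟨r, hrmono, hr0, hrt⟩ := h 2 ![U₁, U₂]
      (fun i => by fin_cases i <;> assumption) (fun i => by fin_cases i <;> assumption)
    obtain ⟨x₁, hx₁⟩ := nV₁
    obtain ⟨ε₁, hε₁, hball₁⟩ := Metric.isOpen_iff.1 hV₁ x₁ hx₁
    obtain ⟨x₂, hx₂⟩ := nV₂
    obtain ⟨ε₂, hε₂, hball₂⟩ := Metric.isOpen_iff.1 hV₂ x₂ hx₂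
    have hε : (0:ℝ) < min ε₁ ε₂ := lt_min hε₁ hε₂
    have h1 : ∀ᶠ j in atTop,
        Metric.hausdorffDist (closure (f^[r j] '' (![U₁, U₂] 0))) (Set.univ : Set X)
          < min ε₁ ε₂ := (hrt 0).eventually (gt_mem_nhds hε)
    have h2 : ∀ᶠ j in atTop,
        Metric.hausdorffDist (closure (f^[r j] '' (![U₁, U₂] 1))) (Set.univ : Set X)
          < min ε₁ ε₂ := (hrt 1).eventually (gt_mem_nhds hε)
    obtain ⟨j, hj1, hj2⟩ := (h1.and h2).exists
    simp only [Matrix.cons_val_zero, Matrix.cons_val_one, Matrix.head_cons] at hj1 hj2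
    refine ⟨r j, le_trans hr0 (hrmono.monotone (Nat.zero_le j)), ?_, ?_⟩
    · have hSne : (f^[r j] '' U₁).Nonempty := nU₁.image _
      have hfin : EMetric.hausdorffEdist (closure (f^[r j] '' U₁)) (Set.univ : Set X) ≠ ⊤ :=
        Metric.hausdorffEdist_ne_top_of_nonempty_of_bounded hSne.closure univ_nonempty
          isBounded_of_compactSpace isBounded_of_compactSpace
      have hinf : Metric.infDist x₁ (closure (f^[r j] '' U₁)) < ε₁ := by
        calc Metric.infDist x₁ (closure (f^[r j] '' U₁))
            ≤ Metric.hausdorffDist (Set.univ : Set X) (closure (f^[r j] '' U₁)) :=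
              Metric.infDist_le_hausdorffDist_of_mem (mem_univ x₁)
                (by rw [EMetric.hausdorffEdist_comm]; exact hfin)
          _ = Metric.hausdorffDist (closure (f^[r j] '' U₁)) (Set.univ : Set X) :=
              Metric.hausdorffDist_comm
          _ < min ε₁ ε₂ := hj1
          _ ≤ ε₁ := min_le_left _ _
      rw [Metric.infDist_closure] at hinf
      obtain ⟨y, hyS, hyd⟩ := (Metric.infDist_lt_iff hSne).1 hinf
      exact ⟨y, hyS, hball₁ (by rwa [mem_ball, dist_comm])⟩
    · have hSne : (f^[r j] '' U₂).Nonempty := nU₂.image _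
      have hfin : EMetric.hausdorffEdist (closure (f^[r j] '' U₂)) (Set.univ : Set X) ≠ ⊤ :=
        Metric.hausdorffEdist_ne_top_of_nonempty_of_bounded hSne.closure univ_nonempty
          isBounded_of_compactSpace isBounded_of_compactSpace
      have hinf : Metric.infDist x₂ (closure (f^[r j] '' U₂)) < ε₂ := by
        calc Metric.infDist x₂ (closure (f^[r j] '' U₂))
            ≤ Metric.hausdorffDist (Set.univ : Set X) (closure (f^[r j] '' U₂)) :=
              Metric.infDist_le_hausdorffDist_of_mem (mem_univ x₂)
                (by rw [EMetric.hausdorffEdist_comm]; exact hfin)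
          _ = Metric.hausdorffDist (closure (f^[r j] '' U₂)) (Set.univ : Set X) :=
              Metric.hausdorffDist_comm
          _ < min ε₁ ε₂ := hj2
          _ ≤ ε₂ := min_le_right _ _
      rw [Metric.infDist_closure] at hinf
      obtain ⟨y, hyS, hyd⟩ := (Metric.infDist_lt_iff hSne).1 hinf
      exact ⟨y, hyS, hball₂ (by rwa [mem_ball, dist_comm])⟩
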